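/- arXiv:0904.1222 — 2 statements merged into one kernel-verified Lean document; each statement's English description precedes it below -/
import Mathlib

section
/- The number of cycles of a uniformly random permutation of {1,...,n} has the same distribution as a sum ∑_{k=1}^n J_k of independent indicator random variables with P(J_k = 1) = 1/k. -/
open MeasureTheory ProbabilityTheory

/-- Number of cycles (including fixed points) of a permutation of `Fin n`. -/
def numCycles {n : ℕ} (σ : Equiv.Perm (Fin n)) : ℕ :=
  σ.cycleType.card + (Finset.univ.filter fun x => σ x = x).card

section Aux

open Equiv Equiv.Perm Finset


variable {α : Type*} [Fintype α] [DecidableEq α]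

lemma cycle_extend {c : Perm α} (hc : c.IsCycle) {a b : α}
    (ha : a ∉ c.support) (hb : b ∈ c.support) :
    (Equiv.swap a b * c).IsCycle ∧ (Equiv.swap a b * c).support = insert a c.support := by
  have hca : c a = a := Equiv.Perm.notMem_support.mp ha
  have hab : a ≠ b := fun h => ha (h ▸ hb)
  set g := Equiv.swap a b * c with hg
  have hga : g a = b := by
    simp [hg, Equiv.Perm.mul_apply, hca]
  have hsupp : g.support = insert a c.support := by
    ext x
    simp only [Finset.mem_insert, Equiv.Perm.mem_support]
    by_cases hxa : x = a
    · subst hxa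
      simp [hga, (Ne.symm hab), true_or, iff_true]
    · constructor
      · intro hx
        right
        intro hcx
        apply hx
        have hxb : x ≠ b := by rintro rfl; exact (Equiv.Perm.mem_support.mp hb) hcx
        simp [hg, Equiv.Perm.mul_apply, hcx, Equiv.swap_apply_of_ne_of_ne hxa hxb]
      · rintro (rfl | hcx)
        · exact absurd rfl hxa
        · have h1 : c x ∈ c.support := Equiv.Perm.apply_mem_support.mpr (Equiv.Perm.mem_support.mpr hcx)
          have h2 : c x ≠ a := fun h => ha (h ▸ h1)
          by_cases h3 : c x = b
          · simp [hg, Equiv.Perm.mul_apply, h3]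
            exact Ne.symm hxa
          · simp [hg, Equiv.Perm.mul_apply, Equiv.swap_apply_of_ne_of_ne h2 h3]
            exact hcx
  refine ⟨?_, hsupp⟩
  have key : ∀ j : ℕ, ∃ i : ℕ, (g ^ i) a = (c ^ j) b := by
    intro j
    induction j with
    | zero => exact ⟨1, by simpa using hga⟩
    | succ j ih =>
      obtain ⟨i, hi⟩ := ih
      by_cases hcb : (c ^ (j + 1)) b = b
      · exact ⟨1, by simpa [hcb] using hga⟩
      · refine ⟨i + 1, ?_⟩
        have hmem : (c ^ (j + 1)) b ∈ c.support :=
          Equiv.Perm.pow_apply_mem_support.mpr hb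
        have hne_a : (c ^ (j + 1)) b ≠ a := fun h => ha (h ▸ hmem)
        rw [pow_succ', Equiv.Perm.mul_apply, hi, hg, Equiv.Perm.mul_apply, ← Equiv.Perm.mul_apply c,
          ← pow_succ']
        exact Equiv.swap_apply_of_ne_of_ne hne_a hcb
  refine ⟨a, by rw [hga]; exact Ne.symm hab, fun y hy => ?_⟩
  have hy' : y ∈ g.support := Equiv.Perm.mem_support.mpr hy
  rw [hsupp, Finset.mem_insert] at hy'
  rcases hy' with rfl | hy'
  · exact ⟨0, rfl⟩
  · obtain ⟨j, hj⟩ := (hc.sameCycle (Equiv.Perm.mem_support.mp hb) (Equiv.Perm.mem_support.mp hy')).exists_pow_eq'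
    obtain ⟨i, hi⟩ := key j
    exact ⟨(i : ℤ), by rw [zpow_natCast, hi, hj.2]⟩

lemma merge_counts {σ : Perm α} {a b : α} (ha : σ a = a) (hab : a ≠ b) :
    ((Equiv.swap a b * σ).cycleType.card = σ.cycleType.card + 1 ∧
      (Equiv.swap a b * σ).support.card = σ.support.card + 2) ∨
    ((Equiv.swap a b * σ).cycleType.card = σ.cycleType.card ∧
      (Equiv.swap a b * σ).support.card = σ.support.card + 1) := by
  have hanotin : a ∉ σ.support := Equiv.Perm.notMem_support.mpr ha
  by_cases hb : σ b = b
  · left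
    have hd : Equiv.Perm.Disjoint (Equiv.swap a b) σ := by
      rw [Equiv.Perm.disjoint_iff_eq_or_eq]
      intro x
      by_cases hx : x = a ∨ x = b
      · rcases hx with rfl | rfl
        · exact Or.inr ha
        · exact Or.inr hb
      · push_neg at hx
        exact Or.inl (Equiv.swap_apply_of_ne_of_ne hx.1 hx.2)
    constructor
    · rw [Equiv.Perm.Disjoint.cycleType_mul hd, (Equiv.Perm.isCycle_swap hab).cycleType]
      simp [add_comm]
    · rw [Equiv.Perm.Disjoint.support_mul hd, Equiv.Perm.support_swap hab,
        Finset.card_union_of_disjoint]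
      · rw [Finset.card_pair hab]; ring
      · rw [Finset.disjoint_left]
        intro x hx
        rcases Finset.mem_insert.mp hx with rfl | hx
        · exact fun h => hanotin h
        · simp only [Finset.mem_singleton] at hx
          subst hx
          exact fun h => (Equiv.Perm.mem_support.mp h) hb
  · right
    set c := σ.cycleOf b with hcdef
    have hbsupp : b ∈ σ.support := Equiv.Perm.mem_support.mpr hb
    have hcmem : c ∈ σ.cycleFactorsFinset :=
      Equiv.Perm.cycleOf_mem_cycleFactorsFinset_iff.mpr hbsupp
    have hc : c.IsCycle := (Equiv.Perm.mem_cycleFactorsFinset_iff.mp hcmem).1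
    have hd : Equiv.Perm.Disjoint (σ * c⁻¹) c :=
      Equiv.Perm.disjoint_mul_inv_of_mem_cycleFactorsFinset hcmem
    set τ := σ * c⁻¹ with hτdef
    have hστ : σ = τ * c := by rw [hτdef]; simp [mul_assoc]
    have hsubc : c.support ⊆ σ.support :=
      Equiv.Perm.mem_cycleFactorsFinset_support_le hcmem
    have hac : a ∉ c.support := fun h => hanotin (hsubc h)
    have hbc : b ∈ c.support := by
      rw [Equiv.Perm.mem_support, Equiv.Perm.cycleOf_apply_self]
      exact hb
    obtain ⟨hgc, hgs⟩ := cycle_extend hc hac hbc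
    set g := Equiv.swap a b * c with hgdef
    have haτ : a ∉ τ.support := by
      rw [Equiv.Perm.notMem_support]
      have hca : c a = a := Equiv.Perm.notMem_support.mp hac
      rw [hτdef, Equiv.Perm.mul_apply]
      rw [show c⁻¹ a = a from by rw [Equiv.Perm.inv_eq_iff_eq, hca]]
      exact ha
    have hdsupp : _root_.Disjoint τ.support c.support :=
      Equiv.Perm.disjoint_iff_disjoint_support.mp hd
    have hbτ : b ∉ τ.support := fun h => (Finset.disjoint_left.mp hdsupp h) hbc
    have hcomm : Equiv.swap a b * τ = τ * Equiv.swap a b := by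
      have : Equiv.Perm.Disjoint (Equiv.swap a b) τ := by
        rw [Equiv.Perm.disjoint_iff_disjoint_support, Equiv.Perm.support_swap hab]
        rw [Finset.disjoint_left]
        intro x hx
        rcases Finset.mem_insert.mp hx with rfl | hx
        · exact haτ
        · simp only [Finset.mem_singleton] at hx; subst hx; exact hbτ
      exact (Equiv.Perm.Disjoint.commute this).eq
    have heq : Equiv.swap a b * σ = τ * g := by
      rw [hστ, hgdef, ← mul_assoc, hcomm, mul_assoc]
    have hdτg : Equiv.Perm.Disjoint τ g := by
      rw [Equiv.Perm.disjoint_iff_disjoint_support, hgs, Finset.disjoint_insert_right]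
      exact ⟨haτ, hdsupp⟩
    constructor
    · rw [heq, Equiv.Perm.Disjoint.cycleType_mul hdτg, hστ, Equiv.Perm.Disjoint.cycleType_mul hd, hgc.cycleType, hc.cycleType]
      simp
    · rw [heq, Equiv.Perm.Disjoint.support_mul hdτg, hgs, hστ, Equiv.Perm.Disjoint.support_mul hd]
      rw [Finset.union_comm τ.support, Finset.insert_union,
        Finset.card_insert_of_notMem, Finset.union_comm]
      rw [Finset.mem_union]
      rintro (h | h)
      · exact hac h
      · exact haτ h

lemma numCycles_eq {n : ℕ} (σ : Equiv.Perm (Fin n)) :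
    numCycles σ = Multiset.card σ.cycleType + (n - σ.support.card) := by
  have h := Finset.card_filter_add_card_filter_not
    (s := Finset.univ) (p := fun x : Fin n => σ x = x)
  have hsupp : σ.support = Finset.univ.filter fun x => ¬ σ x = x := rfl
  unfold numCycles
  rw [← hsupp] at h
  simp only [Finset.card_univ, Fintype.card_fin] at h
  omega

lemma numCycles_merge {n : ℕ} (σ : Equiv.Perm (Fin (n+1))) {a b : Fin (n+1)}
    (ha : σ a = a) (hab : a ≠ b) :
    numCycles (Equiv.swap a b * σ) + 1 = numCycles σ := by
  have h1 : (Equiv.swap a b * σ).support.card ≤ n + 1 := by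
    have := Finset.card_le_univ (Equiv.swap a b * σ).support
    simpa using this
  have h2 := numCycles_eq (Equiv.swap a b * σ)
  have h3 := numCycles_eq σ
  rcases merge_counts ha hab with ⟨hc, hs⟩ | ⟨hc, hs⟩ <;> omega

lemma numCycles_extend {n : ℕ} (e : Equiv.Perm (Fin n)) :
    numCycles (Equiv.Perm.decomposeFin.symm (0, e)) = numCycles e + 1 := by
  have hext : Equiv.Perm.decomposeFin.symm (0, e)
      = e.extendDomain (finSuccAboveEquiv (0 : Fin (n+1))) := by
    ext x
    refine Fin.cases ?_ (fun i => ?_) x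
    · rw [Equiv.Perm.decomposeFin_symm_apply_zero]
      rw [Equiv.Perm.extendDomain_apply_not_subtype]
      simp
    · rw [Equiv.Perm.decomposeFin_symm_apply_succ]
      have : (i.succ : Fin (n+1)) = ((finSuccAboveEquiv (0 : Fin (n+1))) i : Fin (n+1)) := by
        simp [finSuccAboveEquiv_apply, Fin.zero_succAbove]
      rw [this, Equiv.Perm.extendDomain_apply_image]
      simp [finSuccAboveEquiv_apply, Fin.zero_succAbove]
  rw [hext, numCycles_eq, numCycles_eq, Equiv.Perm.cycleType_extendDomain,
    Equiv.Perm.card_support_extend_domain]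
  have : e.support.card ≤ n := by simpa using Finset.card_le_univ e.support
  omega

lemma numCycles_decomposeFin {n : ℕ} (p : Fin (n+1)) (e : Equiv.Perm (Fin n)) :
    numCycles (Equiv.Perm.decomposeFin.symm (p, e))
      = numCycles e + (if p = 0 then 1 else 0) := by
  by_cases hp : p = 0
  · subst hp; simp [numCycles_extend]
  · have hsplit : Equiv.Perm.decomposeFin.symm (p, e)
        = Equiv.swap 0 p * Equiv.Perm.decomposeFin.symm (0, e) := by
      ext x
      refine Fin.cases ?_ (fun i => ?_) x
      · simp
      · simp [Equiv.Perm.decomposeFin_symm_apply_succ]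
    have h0 : (Equiv.Perm.decomposeFin.symm ((0 : Fin (n+1)), e)) 0 = 0 :=
      Equiv.Perm.decomposeFin_symm_apply_zero 0 e
    have := numCycles_merge (Equiv.Perm.decomposeFin.symm ((0 : Fin (n+1)), e)) h0 (Ne.symm hp)
    rw [← hsplit, numCycles_extend] at this
    simp [hp]
    omega

def Scount (n m : ℕ) : ℕ :=
  (Finset.univ.filter fun σ : Equiv.Perm (Fin n) => numCycles σ = m).card

lemma Scount_succ (n m : ℕ) :
    Scount (n+1) m =
      (Finset.univ.filter fun e : Equiv.Perm (Fin n) => numCycles e + 1 = m).card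
        + n * Scount n m := by
  classical
  have hcard : Scount (n+1) m
      = Fintype.card {σ : Equiv.Perm (Fin (n+1)) // numCycles σ = m} :=
    (Fintype.card_subtype _).symm
  have hequiv : {σ : Equiv.Perm (Fin (n+1)) // numCycles σ = m}
      ≃ {q : Fin (n+1) × Equiv.Perm (Fin n) //
          numCycles q.2 + (if q.1 = 0 then 1 else 0) = m} := by
    refine Equiv.Perm.decomposeFin.subtypeEquiv fun σ => ?_
    rw [← numCycles_decomposeFin (Equiv.Perm.decomposeFin σ).1 (Equiv.Perm.decomposeFin σ).2]
    simp
  rw [hcard, Fintype.card_congr hequiv, Fintype.card_subtype]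
  have hset : (Finset.univ.filter fun q : Fin (n+1) × Equiv.Perm (Fin n) =>
        numCycles q.2 + (if q.1 = 0 then 1 else 0) = m)
      = ((Finset.univ.filter fun p : Fin (n+1) => p = 0) ×ˢ
          (Finset.univ.filter fun e : Equiv.Perm (Fin n) => numCycles e + 1 = m))
        ∪ ((Finset.univ.filter fun p : Fin (n+1) => ¬ p = 0) ×ˢ
          (Finset.univ.filter fun e : Equiv.Perm (Fin n) => numCycles e = m)) := by
    ext ⟨p, e⟩
    by_cases hp : p = 0 <;> simp [hp, Finset.mem_product]
  rw [hset, Finset.card_union_of_disjoint, Finset.card_product, Finset.card_product]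
  · have h1 : (Finset.univ.filter fun p : Fin (n+1) => p = 0).card = 1 := by
      rw [Finset.filter_eq']
      simp
    have h2 : (Finset.univ.filter fun p : Fin (n+1) => ¬ p = 0).card = n := by
      rw [Finset.filter_not, Finset.filter_eq']
      simp only [Finset.mem_univ, if_true]
      rw [Finset.card_sdiff_of_subset (by simp)]
      simp
    rw [h1, h2, one_mul]
    rfl
  · rw [Finset.disjoint_left]
    rintro ⟨p, e⟩ h1 h2
    rw [Finset.mem_product] at h1 h2
    have := Finset.mem_filter.mp h1.1
    have := Finset.mem_filter.mp h2.1
    tauto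

lemma ennreal_arith (a b n : ℕ) :
    ((a : ENNReal) / (n.factorial : ENNReal)) * ((n : ENNReal) / ((n : ENNReal) + 1))
      + ((b : ENNReal) / (n.factorial : ENNReal)) * (1 / ((n : ENNReal) + 1))
    = (((b + n * a : ℕ)) : ENNReal) / (((n+1).factorial : ENNReal)) := by
  have hfac : (((n+1).factorial : ℕ) : ENNReal)
      = (n.factorial : ENNReal) * ((n : ENNReal) + 1) := by
    rw [Nat.factorial_succ]
    push_cast
    ring
  have h1 : (n.factorial : ENNReal) ≠ 0 := by
    exact_mod_cast Nat.cast_ne_zero.mpr n.factorial_ne_zero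
  have h2 : ((n : ENNReal) + 1) ≠ ⊤ := by
    simp [ENNReal.add_eq_top]
  rw [hfac, div_eq_mul_inv, div_eq_mul_inv, div_eq_mul_inv, div_eq_mul_inv, div_eq_mul_inv,
    ENNReal.mul_inv (Or.inl h1) (Or.inr (by simp))]
  push_cast
  ring

lemma numCycles_one_zero : numCycles (1 : Equiv.Perm (Fin 0)) = 0 := by
  simp [numCycles]

lemma Scount_zero (m : ℕ) : Scount 0 m = if 0 = m then 1 else 0 := by
  have huniv : (Finset.univ : Finset (Equiv.Perm (Fin 0))) = {1} := by
    rw [Finset.eq_singleton_iff_unique_mem]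
    exact ⟨Finset.mem_univ 1, fun σ _ => Equiv.ext fun x => x.elim0⟩
  unfold Scount
  rw [huniv, Finset.filter_singleton, numCycles_one_zero]
  split <;> simp

theorem stmt_aux {Ω : Type*} [MeasurableSpace Ω] (μ : Measure Ω) [IsProbabilityMeasure μ]
    (n : ℕ) (J : ℕ → Ω → ℕ)
    (hmeas : ∀ k, Measurable (J k))
    (hind : iIndepFun J μ)
    (hval : ∀ k ω, J k ω = 0 ∨ J k ω = 1)
    (hp : ∀ k, 1 ≤ k → μ {ω | J k ω = 1} = 1 / (k : ENNReal)) :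
    ∀ m : ℕ,
      μ {ω | ∑ k ∈ Finset.Icc 1 n, J k ω = m} =
        ((Scount n m : ℕ) : ENNReal) / (n.factorial : ENNReal) := by
  induction n with
  | zero =>
    intro m
    have : Finset.Icc 1 0 = (∅ : Finset ℕ) := by simp
    rw [this]
    simp only [Finset.sum_empty]
    rw [Scount_zero m]
    by_cases hm : 0 = m
    · subst hm
      simp [Set.setOf_true]
    · rw [if_neg hm]
      have : {ω : Ω | 0 = m} = ∅ := by
        ext ω; simp [hm]
      rw [this]
      simp
  | succ n ih =>
    intro m
    -- notation
    set T : Ω → ℕ := fun ω => ∑ k ∈ Finset.Icc 1 n, J k ω with hTdef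
    have hT : Measurable T := by
      apply Finset.measurable_sum
      intro i _
      exact hmeas i
    have hTeq : (∑ j ∈ Finset.Icc 1 n, J j) = T := by
      funext ω
      simp [hTdef, Finset.sum_apply]
    have hindep : IndepFun T (J (n+1)) μ := by
      have h := hind.indepFun_finsetSum_of_notMem hmeas
        (show (n+1) ∉ Finset.Icc 1 n by simp)
      rwa [hTeq] at h
    have hsum : ∀ ω, ∑ k ∈ Finset.Icc 1 (n+1), J k ω = J (n+1) ω + T ω := by
      intro ω
      rw [show Finset.Icc 1 (n+1) = insert (n+1) (Finset.Icc 1 n) from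
        (Finset.insert_Icc_right_eq_Icc_add_one (by omega)).symm]
      rw [Finset.sum_insert (by simp)]
    have hmul : ∀ s t : Set ℕ, μ (T ⁻¹' s ∩ (J (n+1)) ⁻¹' t) = μ (T ⁻¹' s) * μ ((J (n+1)) ⁻¹' t) :=
      fun s t => hindep.measure_inter_preimage_eq_mul s t (by trivial) (by trivial)
    have hJ1 : μ ((J (n+1)) ⁻¹' {1}) = 1 / ((n : ENNReal) + 1) := by
      have := hp (n+1) (by omega)
      rw [show ((J (n+1)) ⁻¹' {1}) = {ω | J (n+1) ω = 1} from rfl, this]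
      push_cast
      ring_nf
    have hne : ((n : ENNReal) + 1) ≠ 0 := by simp
    have hnetop : ((n : ENNReal) + 1) ≠ ⊤ := by simp [ENNReal.add_eq_top]
    have hJ0 : μ ((J (n+1)) ⁻¹' {0}) = (n : ENNReal) / ((n : ENNReal) + 1) := by
      have hcompl : (J (n+1)) ⁻¹' {0} = ((J (n+1)) ⁻¹' {1})ᶜ := by
        ext ω
        rcases hval (n+1) ω with h | h <;> simp [h]
      rw [hcompl, measure_compl ((hmeas (n+1)) (by trivial)) (measure_ne_top μ _), measure_univ,
        hJ1]
      have hsum1 : (n : ENNReal) / ((n : ENNReal) + 1) + 1 / ((n : ENNReal) + 1) = 1 := by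
        rw [ENNReal.div_add_div_same, ENNReal.div_self hne hnetop]
      exact (ENNReal.eq_sub_of_add_eq (by
        simp [ENNReal.div_eq_top, hne]) (by rw [add_comm] at hsum1 ⊢; exact hsum1)).symm
    have hihT : ∀ j : ℕ, μ (T ⁻¹' {j}) = ((Scount n j : ℕ) : ENNReal) / (n.factorial : ENNReal) :=
      fun j => ih j
    cases m with
    | zero =>
      have hset : {ω : Ω | ∑ k ∈ Finset.Icc 1 (n+1), J k ω = 0}
          = T ⁻¹' {0} ∩ (J (n+1)) ⁻¹' {0} := by
        ext ω
        simp only [Set.mem_setOf_eq, hsum ω, Set.mem_inter_iff, Set.mem_preimage,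
          Set.mem_singleton_iff]
        omega
      rw [hset, hmul, hihT 0, hJ0]
      have hS : Scount (n+1) 0 = 0 + n * Scount n 0 := by
        rw [Scount_succ]
        congr 1
        convert Finset.card_empty
        rw [Finset.filter_eq_empty_iff]
        intro e _
        omega
      rw [hS, ← ennreal_arith (Scount n 0) 0 n]
      simp
    | succ m =>
      have hset : {ω : Ω | ∑ k ∈ Finset.Icc 1 (n+1), J k ω = m + 1}
          = (T ⁻¹' {m+1} ∩ (J (n+1)) ⁻¹' {0}) ∪ (T ⁻¹' {m} ∩ (J (n+1)) ⁻¹' {1}) := by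
        ext ω
        simp only [Set.mem_setOf_eq, hsum ω, Set.mem_union, Set.mem_inter_iff, Set.mem_preimage,
          Set.mem_singleton_iff]
        rcases hval (n+1) ω with h | h <;> rw [h] <;> omega
      have hdisj : Disjoint (T ⁻¹' {m+1} ∩ (J (n+1)) ⁻¹' {0})
          (T ⁻¹' {m} ∩ (J (n+1)) ⁻¹' {1}) := by
        rw [Set.disjoint_left]
        rintro ω ⟨_, h0⟩ ⟨_, h1⟩
        simp only [Set.mem_preimage, Set.mem_singleton_iff] at h0 h1
        omega
      have hmeas2 : MeasurableSet (T ⁻¹' {m} ∩ (J (n+1)) ⁻¹' {1}) :=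
        (hT (by trivial)).inter ((hmeas (n+1)) (by trivial))
      rw [hset, measure_union hdisj hmeas2, hmul, hmul, hihT (m+1), hihT m, hJ0, hJ1]
      have hS : Scount (n+1) (m+1) = Scount n m + n * Scount n (m+1) := by
        rw [Scount_succ]
        simp only [add_left_inj]
        rfl
      rw [hS, ← ennreal_arith (Scount n (m+1)) (Scount n m) n]

end Aux

/-- The number of cycles of a uniformly random permutation of `{1,…,n}` is distributed
as a sum of independent indicators `J_1,…,J_n` with `P(J_k = 1) = 1/k`. -/
theorem stmt_1 {Ω : Type*} [MeasurableSpace Ω] (μ : Measure Ω) [IsProbabilityMeasure μ]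
    (n : ℕ) (J : ℕ → Ω → ℕ)
    (hmeas : ∀ k, Measurable (J k))
    (hind : iIndepFun J μ)
    (hval : ∀ k ω, J k ω = 0 ∨ J k ω = 1)
    (hp : ∀ k, 1 ≤ k → μ {ω | J k ω = 1} = 1 / (k : ENNReal)) :
    ∀ m : ℕ,
      μ {ω | ∑ k ∈ Finset.Icc 1 n, J k ω = m} =
        ((Finset.univ.filter fun σ : Equiv.Perm (Fin n) => numCycles σ = m).card : ENNReal) /
          (n.factorial : ENNReal) := by
  intro m
  exact stmt_aux μ n J hmeas hind hval hp m
end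

section
/- For 0 ≤ r ≤ n−1, the recursively defined numbers a_{n-1,n-r-1} admit the explicit formula a_{n-1,n-r-1} = (n−r−1)! · ∑_{1 ≤ j_1 < ... < j_r ≤ n−1} j_1 (j_2 − 1) ··· (j_r − (r−1)). -/
/-- The triangular array `a_{k,m}` with `a_{0,0} = 1` and
`a_{k,m} = m a_{k-1,m-1} + (m+1) a_{k-1,m}`. -/
def aCoef : ℕ → ℕ → ℕ
  | 0, 0 => 1
  | 0, _ + 1 => 0
  | k + 1, 0 => aCoef k 0
  | k + 1, m + 1 => (m + 1) * aCoef k m + (m + 2) * aCoef k (m + 1)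

lemma aCoef_eq_zero : ∀ k m : ℕ, k < m → aCoef k m = 0 := by
  intro k
  induction k with
  | zero => intro m h; match m, h with | m + 1, _ => rfl
  | succ k ih =>
    intro m h
    match m, h with
    | m + 1, h =>
      show (m + 1) * aCoef k m + (m + 2) * aCoef k (m + 1) = 0
      rw [ih m (by omega), ih (m + 1) (by omega)]
      ring

lemma sort_insert_top {s : Finset ℕ} {b : ℕ} (h : ∀ a ∈ s, a < b) :
    (insert b s).sort (· ≤ ·) = s.sort (· ≤ ·) ++ [b] := by
  have hb : b ∉ s := fun hb => lt_irrefl b (h b hb)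
  have hperm : List.Perm ((insert b s).sort (· ≤ ·)) (s.sort (· ≤ ·) ++ [b]) := by
    rw [← Multiset.coe_eq_coe, ← Multiset.coe_add, Finset.sort_eq, Finset.sort_eq,
      Finset.insert_val, Multiset.ndinsert_of_notMem hb, Multiset.coe_singleton,
      add_comm, Multiset.singleton_add]
  have hs2 : (s.sort (· ≤ ·) ++ [b]).Pairwise (· ≤ ·) := by
    rw [List.pairwise_append]
    refine ⟨Finset.pairwise_sort _ _, List.pairwise_singleton _ b, ?_⟩
    intro x hx y hy
    simp only [List.mem_singleton] at hy
    subst hy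
    exact le_of_lt (h x ((Finset.mem_sort _).mp hx))
  exact List.Perm.eq_of_pairwise' (Finset.pairwise_sort _ _) hs2 hperm

/-- The sum on the right-hand side. -/
private def F (n r : ℕ) : ℕ :=
  ∑ s ∈ (Finset.Icc 1 n).powersetCard r,
    ((s.sort (· ≤ ·)).zipIdx.map fun p => p.1 - p.2).prod

lemma Icc_one_succ (n : ℕ) : Finset.Icc 1 (n + 1) = insert (n + 1) (Finset.Icc 1 n) := by
  ext x; simp [Finset.mem_Icc]; omega

lemma F_succ (n t : ℕ) (ht : t ≤ n) :
    F (n + 1) (t + 1) = F n (t + 1) + (n + 1 - t) * F n t := by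
  have hnotmem : (n + 1) ∉ Finset.Icc 1 n := by simp
  have hsplit := Finset.powersetCard_succ_insert hnotmem t
  rw [F, Icc_one_succ, hsplit]
  have hdisj : Disjoint ((Finset.Icc 1 n).powersetCard (t + 1))
      (((Finset.Icc 1 n).powersetCard t).image (insert (n + 1))) := by
    rw [Finset.disjoint_left]
    intro s hs hs'
    rw [Finset.mem_powersetCard] at hs
    rw [Finset.mem_image] at hs'
    obtain ⟨u, hu, rfl⟩ := hs'
    exact hnotmem (hs.1 (Finset.mem_insert_self _ _))
  rw [Finset.sum_union hdisj]
  congr 1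
  rw [Finset.sum_image ?hinj]
  case hinj =>
    intro a ha b hb hab
    rw [Finset.mem_coe, Finset.mem_powersetCard] at ha hb
    have ha' : (n + 1) ∉ a := fun h => hnotmem (ha.1 h)
    have hb' : (n + 1) ∉ b := fun h => hnotmem (hb.1 h)
    rw [← Finset.erase_insert ha', ← Finset.erase_insert hb', hab]
  rw [F, Finset.mul_sum]
  apply Finset.sum_congr rfl
  intro s hs
  rw [Finset.mem_powersetCard] at hs
  have hlt : ∀ a ∈ s, a < n + 1 := by
    intro a ha
    have := hs.1 ha
    rw [Finset.mem_Icc] at this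
    omega
  rw [sort_insert_top hlt, List.zipIdx_append, List.map_append, List.prod_append]
  have hlen : (s.sort (· ≤ ·)).length = t := by
    rw [Finset.length_sort, hs.2]
  rw [hlen]
  show _ * ([(n + 1, 0 + t)].map fun p => p.1 - p.2).prod = _
  simp [mul_comm]

lemma key : ∀ n r : ℕ, r ≤ n → aCoef n (n - r) = (n - r).factorial * F n r := by
  intro n
  induction n with
  | zero =>
    intro r hr
    interval_cases r
    simp [aCoef, F]
  | succ n ih =>
    intro r hr
    match r, hr with
    | 0, _ =>
      have h1 : aCoef n (n + 1) = 0 := aCoef_eq_zero n (n + 1) (by omega)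
      have h2 := ih 0 (by omega)
      simp only [Nat.sub_zero] at h2 ⊢
      show (n + 1) * aCoef n n + (n + 2) * aCoef n (n + 1)
          = (n + 1).factorial * F (n + 1) 0
      rw [h1, h2]
      have hF : ∀ m, F m 0 = 1 := by
        intro m; rw [F]; simp [Finset.powersetCard_zero]
      rw [hF, hF, Nat.factorial_succ]
      ring
    | t + 1, hr =>
      have ht : t ≤ n := by omega
      rw [F_succ n t ht]
      rcases Nat.lt_or_ge t n with htn | htn
      · -- t < n
        obtain ⟨u, hu⟩ : ∃ u, n - t = u + 1 := ⟨n - t - 1, by omega⟩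
        have h1 : n + 1 - (t + 1) = u + 1 := by omega
        have h2 : n - (t + 1) = u := by omega
        have h3 : n + 1 - t = u + 2 := by omega
        rw [h1, h3]
        show (u + 1) * aCoef n u + (u + 2) * aCoef n (u + 1)
            = (u + 1).factorial * (F n (t + 1) + (u + 2) * F n t)
        have ihA := ih (t + 1) (by omega)
        have ihB := ih t ht
        rw [h2] at ihA
        rw [hu] at ihB
        rw [ihA, ihB, Nat.factorial_succ]
        ring
      · -- t = n
        have htn' : t = n := le_antisymm ht htn
        subst htn'
        have h1 : t + 1 - (t + 1) = 0 := by omega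
        have h3 : t + 1 - t = 1 := by omega
        rw [h1, h3]
        have hF0 : F t (t + 1) = 0 := by
          rw [F]
          have : (Finset.Icc 1 t).powersetCard (t + 1) = ∅ := by
            rw [Finset.powersetCard_eq_empty]
            simp [Nat.card_Icc]
          rw [this, Finset.sum_empty]
        rw [hF0]
        have ihB := ih t le_rfl
        rw [Nat.sub_self] at ihB
        show aCoef t 0 = Nat.factorial 0 * (0 + 1 * F t t)
        rw [ihB]
        simp

/-- For `0 ≤ r ≤ n-1`:
`a_{n-1,n-r-1} = (n-r-1)! ∑_{1 ≤ j_1 < ⋯ < j_r ≤ n-1} j_1 (j_2-1) ⋯ (j_r-(r-1))`,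
where the sum is over `r`-element subsets of `{1,…,n-1}` listed in increasing order. -/
theorem stmt_6 (n r : ℕ) (hn : 1 ≤ n) (hr : r ≤ n - 1) :
    aCoef (n - 1) (n - r - 1) =
      (n - r - 1).factorial *
        ∑ s ∈ (Finset.Icc 1 (n - 1)).powersetCard r,
          ((s.sort (· ≤ ·)).zipIdx.map fun p => p.1 - p.2).prod := by
  have h : n - r - 1 = n - 1 - r := by omega
  rw [h]
  exact key (n - 1) r hr
end
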